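/- (Yankov–von Neumann selection) Let f : (X,E) → (Y,F) be a surjective measurable map, where (X,E) and (Y,F) are separable type A spaces. Then there exists a map g : Y → X with f(g(y)) = y for all y ∈ Y which is universally measurable: for every E' ∈ E and every probability measure ν on (Y,F) there exist F⁻, F⁺ ∈ F with F⁻ ⊆ g⁻¹(E') ⊆ F⁺ and ν(F⁺ \ F⁻) = 0. -/

import Mathlib

open MeasureTheory

/-- A map `f : (X,E) → (Y,F)` between measurable spaces is *exactly measurable* if
`f⁻¹(F) = E`. -/
def ExactlyMeasurable {X Y : Type*} [mX : MeasurableSpace X] [mY : MeasurableSpace Y]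
    (f : X → Y) : Prop :=
  MeasurableSpace.comap f mY = mX

/-- A countably generated measurable space `(X,E)` is a *type A space* if there is an
exactly measurable map `f : (X,E) → (M,B)` into the Cantor space whose range is an
analytic subset of `M`. -/
def IsTypeA (X : Type*) [MeasurableSpace X] : Prop :=
  MeasurableSpace.CountablyGenerated X ∧
    ∃ f : X → (ℕ → Bool), ExactlyMeasurable f ∧ MeasureTheory.AnalyticSet (Set.range f)

open MeasureTheory Set Filter
open scoped ENNReal
instance cantorPolish : PolishSpace (ℕ → Bool) :=
  @instPolishSpaceOfSeparableSpaceOfIsCompletelyMetrizableSpace _ _ inferInstance inferInstance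


namespace YvN

lemma exists_le_add_of_iSup {c : ℕ → ℝ≥0∞} {b ε : ℝ≥0∞} (h : b = ⨆ k, c k)
    (hb : b ≠ ⊤) (hε : ε ≠ 0) : ∃ k, b ≤ c k + ε := by
  by_cases hbe : b ≤ ε
  · exact ⟨0, hbe.trans le_add_self⟩
  · push_neg at hbe
    have h1 : b - ε < b := ENNReal.sub_lt_self hb (fun h0 => by simp [h0] at hbe) hε
    obtain ⟨k, hk⟩ : ∃ k, b - ε < c k := lt_iSup_iff.mp (h ▸ h1)
    refine ⟨k, ?_⟩
    calc b = b - ε + ε := (tsub_add_cancel_of_le hbe.le).symm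
    _ ≤ c k + ε := add_le_add_left hk.le ε

lemma measure_iUnion_mono_eq {α : Type*} [MeasurableSpace α] (μ : Measure α)
    {s : ℕ → Set α} (hs : Monotone s) : μ (⋃ n, s n) = ⨆ n, μ (s n) :=
  hs.directed_le.measure_iUnion

/-- the tree-bounded set determined by a list of bounds -/
def T (s : List ℕ) : Set (ℕ → ℕ) := {x | ∀ i < s.length, x i ≤ s.getD i 0}

lemma getD_append_lt (s : List ℕ) (k i : ℕ) (h : i < s.length) :
    (s ++ [k]).getD i 0 = s.getD i 0 := by
  rw [List.getD_eq_getElem?_getD, List.getD_eq_getElem?_getD, List.getElem?_append_left h]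

lemma getD_append_self (s : List ℕ) (k : ℕ) : (s ++ [k]).getD s.length 0 = k := by
  rw [List.getD_eq_getElem?_getD, List.getElem?_append_right le_rfl]; simp

lemma getD_prefix {s t : List ℕ} (h : s <+: t) {i : ℕ} (hi : i < s.length) :
    t.getD i 0 = s.getD i 0 := by
  obtain ⟨r, rfl⟩ := h
  rw [List.getD_eq_getElem?_getD, List.getD_eq_getElem?_getD, List.getElem?_append_left hi]

lemma T_nil : T [] = univ := by ext x; simp [T]

lemma mem_T_append {s : List ℕ} {k : ℕ} {x : ℕ → ℕ} :
    x ∈ T (s ++ [k]) ↔ x ∈ T s ∧ x s.length ≤ k := by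
  constructor
  · intro hx
    refine ⟨fun i hi => ?_, ?_⟩
    · have := hx i (by simp; omega)
      rwa [getD_append_lt _ _ _ hi] at this
    · have := hx s.length (by simp)
      rwa [getD_append_self] at this
  · rintro ⟨h1, h2⟩ i hi
    simp only [List.length_append, List.length_singleton] at hi
    rcases lt_or_ge i s.length with h | h
    · rw [getD_append_lt _ _ _ h]; exact h1 i h
    · have : i = s.length := by omega
      subst this; rwa [getD_append_self]

lemma T_append_mono (s : List ℕ) : Monotone (fun k => T (s ++ [k])) := by
  intro k l hkl x hx
  rw [mem_T_append] at hx ⊢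
  exact ⟨hx.1, hx.2.trans hkl⟩

lemma T_append_iUnion (s : List ℕ) : T s = ⋃ k, T (s ++ [k]) := by
  ext x
  simp only [mem_iUnion, mem_T_append]
  exact ⟨fun hx => ⟨x s.length, hx, le_rfl⟩, fun ⟨k, hk, _⟩ => hk⟩

set_option linter.unusedSectionVars false

variable {α : Type*} [TopologicalSpace α] [PolishSpace α] [MeasurableSpace α] [BorelSpace α]
variable (σ : (ℕ → ℕ) → α) (μ : Measure α)

lemma sup_T_eq (s : List ℕ) : μ (σ '' T s) = ⨆ k, μ (σ '' T (s ++ [k])) := by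
  rw [T_append_iUnion s, image_iUnion,
    measure_iUnion_mono_eq μ (fun k l hkl => image_mono (T_append_mono s hkl))]

/-- choice of a next bound keeping the outer measure large -/
noncomputable def nextB (ε : ℝ≥0∞) (s : List ℕ) : ℕ :=
  if h : μ (σ '' T s) ≠ ⊤ ∧ ε / 2 ^ (s.length + 1) ≠ 0 then
    (exists_le_add_of_iSup (sup_T_eq σ μ s) h.1 h.2).choose
  else 0

lemma nextB_spec (ε : ℝ≥0∞) (s : List ℕ) (h1 : μ (σ '' T s) ≠ ⊤) (h2 : ε / 2 ^ (s.length + 1) ≠ 0) :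
    μ (σ '' T s) ≤ μ (σ '' T (s ++ [nextB σ μ ε s])) + ε / 2 ^ (s.length + 1) := by
  rw [nextB, dif_pos ⟨h1, h2⟩]
  exact (exists_le_add_of_iSup (sup_T_eq σ μ s) h1 h2).choose_spec

/-- the recursively chosen sequence of bound-lists -/
noncomputable def seqs (ε : ℝ≥0∞) : ℕ → List ℕ
  | 0 => []
  | n + 1 => seqs ε n ++ [nextB σ μ ε (seqs ε n)]

lemma seqs_length (ε : ℝ≥0∞) (n : ℕ) : (seqs σ μ ε n).length = n := by
  induction n with
  | zero => rfl
  | succ n ih => simp [seqs, ih]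

lemma seqs_prefix (ε : ℝ≥0∞) {n m : ℕ} (h : n ≤ m) : seqs σ μ ε n <+: seqs σ μ ε m := by
  induction m with
  | zero => simp_all
  | succ m ih =>
    rcases Nat.lt_or_ge n (m+1) with h' | h'
    · exact (ih (by omega)).trans ⟨_, rfl⟩
    · have : n = m + 1 := by omega
      subst this; exact List.prefix_refl _


open Topology in
lemma budget (ε : ℝ≥0∞) (n : ℕ) :
    (∑ i ∈ Finset.range n, ε / 2 ^ (i + 1)) + ε / 2 ^ n ≤ ε := by
  induction n with
  | zero => simp
  | succ n ih =>
    have h2 : ε / 2 ^ (n + 1) = (ε / 2 ^ n) / 2 := by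
      rw [pow_succ, ENNReal.div_eq_inv_mul, ENNReal.div_eq_inv_mul, ENNReal.div_eq_inv_mul,
        ENNReal.mul_inv (by simp) (by simp)]
      ring
    calc (∑ i ∈ Finset.range (n + 1), ε / 2 ^ (i + 1)) + ε / 2 ^ (n + 1)
        = (∑ i ∈ Finset.range n, ε / 2 ^ (i + 1)) + (ε / 2 ^ (n + 1) + ε / 2 ^ (n + 1)) := by
          rw [Finset.sum_range_succ]; ring
      _ = (∑ i ∈ Finset.range n, ε / 2 ^ (i + 1)) + ε / 2 ^ n := by
          rw [h2, ENNReal.add_halves]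
      _ ≤ ε := ih

lemma budget' (ε : ℝ≥0∞) (n : ℕ) : (∑ i ∈ Finset.range n, ε / 2 ^ (i + 1)) ≤ ε :=
  le_trans le_self_add (budget ε n)

lemma invariant [IsFiniteMeasure μ] {ε : ℝ≥0∞} (hε : ε ≠ 0) (n : ℕ) :
    μ (range σ) ≤ μ (σ '' T (seqs σ μ ε n)) + ∑ i ∈ Finset.range n, ε / 2 ^ (i + 1) := by
  induction n with
  | zero => simp [seqs, T_nil, image_univ]
  | succ n ih =>
    have hstep := nextB_spec σ μ ε (seqs σ μ ε n) (measure_ne_top μ _)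
      (by simp [ENNReal.div_eq_zero_iff, hε, ENNReal.pow_ne_top])
    calc μ (range σ) ≤ μ (σ '' T (seqs σ μ ε n)) + ∑ i ∈ Finset.range n, ε / 2 ^ (i + 1) := ih
      _ ≤ (μ (σ '' T (seqs σ μ ε (n + 1))) + ε / 2 ^ ((seqs σ μ ε n).length + 1))
            + ∑ i ∈ Finset.range n, ε / 2 ^ (i + 1) := by
          exact add_le_add_left hstep _
      _ = μ (σ '' T (seqs σ μ ε (n + 1))) + ∑ i ∈ Finset.range (n + 1), ε / 2 ^ (i + 1) := by
          rw [seqs_length, Finset.sum_range_succ]; ring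

/-- the limiting bound function -/
noncomputable def pfun (ε : ℝ≥0∞) (i : ℕ) : ℕ := (seqs σ μ ε (i + 1)).getD i 0

lemma seqs_getD (ε : ℝ≥0∞) {i n : ℕ} (h : i < n) :
    (seqs σ μ ε n).getD i 0 = pfun σ μ ε i := by
  rw [pfun, getD_prefix (seqs_prefix σ μ ε (show i + 1 ≤ n by omega))]
  rw [seqs_length]; omega

lemma mem_T_seqs (ε : ℝ≥0∞) {x : ℕ → ℕ} {n : ℕ} :
    x ∈ T (seqs σ μ ε n) ↔ ∀ i < n, x i ≤ pfun σ μ ε i := by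
  constructor
  · intro hx i hi
    have := hx i (by rw [seqs_length]; exact hi)
    rwa [seqs_getD σ μ ε hi] at this
  · intro hx i hi
    rw [seqs_length] at hi
    rw [seqs_getD σ μ ε hi]
    exact hx i hi

lemma T_seqs_antitone (ε : ℝ≥0∞) : Antitone (fun n => T (seqs σ μ ε n)) := by
  intro n m hnm x hx
  rw [mem_T_seqs] at hx ⊢
  exact fun i hi => hx i (lt_of_lt_of_le hi hnm)

open Topology in
lemma iInter_closure_subset (hσ : Continuous σ) (ε : ℝ≥0∞) :
    (⋂ n, closure (σ '' T (seqs σ μ ε n))) ⊆ σ '' (univ.pi fun i => Iic (pfun σ μ ε i)) := by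
  intro x hx
  simp only [mem_iInter] at hx
  -- choose approximating points
  obtain ⟨V, hV⟩ := (𝓝 x).exists_antitone_basis
  have hsel : ∀ n, ∃ a, a ∈ T (seqs σ μ ε n) ∧ σ a ∈ V n := by
    intro n
    have hVn : V n ∈ 𝓝 x := hV.1.mem_of_mem trivial
    obtain ⟨z, hz1, a, ha, rfl⟩ := mem_closure_iff_nhds.mp (hx n) (V n) hVn
    exact ⟨a, ha, hz1⟩
  choose a ha1 ha2 using hsel
  have htend : Tendsto (fun n => σ (a n)) atTop (𝓝 x) := hV.tendsto ha2
  -- ultrafilter argument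
  set U : Ultrafilter ℕ := Ultrafilter.of atTop with hUdef
  have hU : (U : Filter ℕ) ≤ atTop := Ultrafilter.of_le _
  have hbig : ∀ i, {n | a n i ≤ pfun σ μ ε i} ∈ U := by
    intro i
    have h1 : Ici (i + 1) ∈ (U : Filter ℕ) := hU (mem_atTop (i + 1))
    refine mem_of_superset h1 (fun n hn => ?_)
    exact (mem_T_seqs σ μ ε).mp (ha1 n) i (by simpa using hn)
  have hsplit : ∀ i, ∃ v ∈ Iic (pfun σ μ ε i), {n | a n i = v} ∈ U := by
    intro i
    rw [← Ultrafilter.finite_biUnion_mem_iff (finite_Iic _)]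
    convert hbig i using 2 with n
    ext n
    simp only [mem_iUnion, mem_setOf_eq, mem_Iic]
    exact ⟨fun ⟨v, hv, he⟩ => he ▸ hv, fun h => ⟨a n i, h, rfl⟩⟩
  choose b hb1 hb2 using hsplit
  have htb : Tendsto a (U : Filter ℕ) (𝓝 b) := by
    rw [tendsto_pi_nhds]
    intro i
    rw [nhds_discrete]
    exact tendsto_pure.2 (hb2 i)
  have h1 : Tendsto (fun n => σ (a n)) (U : Filter ℕ) (𝓝 (σ b)) := (hσ.tendsto b).comp htb
  have h2 : Tendsto (fun n => σ (a n)) (U : Filter ℕ) (𝓝 x) := htend.mono_left hU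
  exact ⟨b, fun i _ => hb1 i, (tendsto_nhds_unique h2 h1).symm⟩

/-- Compact inner approximation of an analytic set w.r.t. a finite measure. -/
lemma compact_approx [IsFiniteMeasure μ] (hσ : Continuous σ) {ε : ℝ≥0∞} (hε : ε ≠ 0) :
    ∃ K, K ⊆ range σ ∧ IsCompact K ∧ μ (range σ) ≤ μ K + ε := by
  set K0 : Set (ℕ → ℕ) := univ.pi fun i => Iic (pfun σ μ ε i) with hK0
  have hK0c : IsCompact K0 := isCompact_univ_pi fun i => (finite_Iic _).isCompact
  refine ⟨σ '' K0, image_subset_range _ _, hK0c.image hσ, ?_⟩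
  set C : ℕ → Set α := fun n => closure (σ '' T (seqs σ μ ε n)) with hC
  have hCanti : Antitone C := fun n m hnm =>
    closure_mono (image_mono (T_seqs_antitone σ μ ε hnm))
  have hmeas : μ (⋂ n, C n) = ⨅ n, μ (C n) :=
    Directed.measure_iInter (fun n => isClosed_closure.measurableSet.nullMeasurableSet)
      hCanti.directed_ge ⟨0, measure_ne_top μ _⟩
  have hsub : (⋂ n, C n) ⊆ σ '' K0 := iInter_closure_subset σ μ hσ ε
  have key : ∀ n, μ (range σ) ≤ μ (C n) + ε := by
    intro n
    calc μ (range σ) ≤ μ (σ '' T (seqs σ μ ε n)) + ∑ i ∈ Finset.range n, ε / 2 ^ (i + 1) :=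
        invariant σ μ hε n
      _ ≤ μ (C n) + ε := add_le_add (measure_mono subset_closure) (budget' ε n)
  calc μ (range σ) ≤ ⨅ n, (μ (C n) + ε) := le_iInf key
    _ = (⨅ n, μ (C n)) + ε := ENNReal.iInf_add.symm
    _ = μ (⋂ n, C n) + ε := by rw [hmeas]
    _ ≤ μ (σ '' K0) + ε := add_le_add_left (measure_mono hsub) ε

/-- Analytic sets are universally measurable (finite-measure version). -/
theorem analytic_approx {A : Set α} (hA : AnalyticSet A) (μ : Measure α) [IsFiniteMeasure μ] :
    ∃ Sm Sp : Set α, MeasurableSet Sm ∧ MeasurableSet Sp ∧ Sm ⊆ A ∧ A ⊆ Sp ∧ μ (Sp \ Sm) = 0 := by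
  rw [AnalyticSet_def] at hA
  rcases hA with rfl | ⟨σ, hσ, rfl⟩
  · exact ⟨∅, ∅, MeasurableSet.empty, MeasurableSet.empty, subset_rfl, subset_rfl, by simp⟩
  · have hK : ∀ n : ℕ, ∃ K, K ⊆ range σ ∧ IsCompact K ∧
        μ (range σ) ≤ μ K + ((n : ℝ≥0∞) + 1)⁻¹ :=
      fun n => compact_approx σ μ hσ (by simp)
    choose K hK1 hK2 hK3 using hK
    refine ⟨⋃ n, K n, toMeasurable μ (range σ),
      MeasurableSet.iUnion (fun n => ((hK2 n).isClosed.measurableSet)),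
      measurableSet_toMeasurable μ _, iUnion_subset hK1,
      subset_toMeasurable μ _, ?_⟩
    have hle : μ (range σ) ≤ μ (⋃ n, K n) := by
      refine ENNReal.le_of_forall_pos_le_add fun δ hδ _ => ?_
      obtain ⟨n, hn⟩ := ENNReal.exists_inv_nat_lt (show (δ : ℝ≥0∞) ≠ 0 by simpa using hδ.ne')
      calc μ (range σ) ≤ μ (K n) + ((n : ℝ≥0∞) + 1)⁻¹ := hK3 n
        _ ≤ μ (⋃ m, K m) + δ := by
            refine add_le_add (measure_mono (subset_iUnion K n)) ?_
            exact le_trans (ENNReal.inv_le_inv.mpr (le_add_right le_rfl)) hn.le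
    have hdiff : μ (toMeasurable μ (range σ) \ ⋃ n, K n) =
        μ (toMeasurable μ (range σ)) - μ (⋃ n, K n) := by
      refine measure_diff ((iUnion_subset hK1).trans (subset_toMeasurable μ _)) ?_
        (measure_ne_top μ _)
      exact (MeasurableSet.iUnion fun n => (hK2 n).isClosed.measurableSet).nullMeasurableSet
    rw [hdiff, measure_toMeasurable]
    exact tsub_eq_zero_of_le hle

end YvN

section part2

open Topology

namespace YvN2

open YvN

/-- exact cylinder determined by a list -/
def cylE (s : List ℕ) : Set (ℕ → ℕ) := {x | ∀ i < s.length, x i = s.getD i 0}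

lemma cylE_nil : cylE [] = Set.univ := by ext x; simp [cylE]

lemma mem_cylE_append {s : List ℕ} {k : ℕ} {x : ℕ → ℕ} :
    x ∈ cylE (s ++ [k]) ↔ x ∈ cylE s ∧ x s.length = k := by
  constructor
  · intro hx
    refine ⟨fun i hi => ?_, ?_⟩
    · have := hx i (by simp; omega)
      rwa [getD_append_lt _ _ _ hi] at this
    · have := hx s.length (by simp)
      rwa [getD_append_self] at this
  · rintro ⟨h1, h2⟩ i hi
    simp only [List.length_append, List.length_singleton] at hi
    rcases lt_or_ge i s.length with h | h
    · rw [getD_append_lt _ _ _ h]; exact h1 i h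
    · have : i = s.length := by omega
      subst this; rwa [getD_append_self]

lemma isClosed_cylE (s : List ℕ) : IsClosed (cylE s) := by
  have : cylE s = ⋂ i ∈ Finset.range s.length, {x : ℕ → ℕ | x i = s.getD i 0} := by
    ext x; simp [cylE]
  rw [this]
  exact isClosed_biInter fun i _ => isClosed_eq (continuous_apply i) continuous_const

lemma exists_cylE_subset {W : Set (ℕ → ℕ)} (hW : IsOpen W) {x : ℕ → ℕ} (hx : x ∈ W) :
    ∃ s : List ℕ, cylE s ⊆ W ∧ x ∈ cylE s := by
  obtain ⟨I, v, hv, hsub⟩ := (isOpen_pi_iff.mp hW) x hx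
  set m := (I.sup id) + 1 with hm
  have hmem : ∀ i ∈ I, i < m := fun i hi => by
    have := Finset.le_sup (f := id) hi; simp only [id] at this; omega
  refine ⟨List.ofFn (fun i : Fin m => x i), ?_, ?_⟩
  · intro z hz
    apply hsub
    intro i hi
    have him : i < m := hmem i hi
    have hz' : z i = x i := by
      have h0 := hz i (by simp only [List.length_ofFn]; exact him)
      rwa [List.getD_eq_getElem _ _ (by simp only [List.length_ofFn]; exact him),
        List.getElem_ofFn] at h0
    rw [hz']
    exact (hv i hi).2
  · intro i hi
    simp only [List.length_ofFn] at hi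
    rw [List.getD_eq_getElem _ _ (by simp only [List.length_ofFn]; exact hi), List.getElem_ofFn]

variable (τ : (ℕ → ℕ) → ((ℕ → Bool) × (ℕ → Bool)))

/-- section of the tree over `y` through the cylinder of `s` -/
def D (y : ℕ → Bool) (s : List ℕ) : Set (ℕ → ℕ) := {x ∈ cylE s | (τ x).1 = y}

/-- the projection of the part of the graph over the cylinder of `s`; an analytic set -/
def P (s : List ℕ) : Set (ℕ → Bool) := Prod.fst '' (τ '' cylE s)

lemma mem_P_iff {y : ℕ → Bool} {s : List ℕ} : y ∈ P τ s ↔ (D τ y s).Nonempty := by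
  constructor
  · rintro ⟨z, ⟨x, hx, rfl⟩, rfl⟩
    exact ⟨x, hx, rfl⟩
  · rintro ⟨x, hx, hfst⟩
    exact ⟨τ x, ⟨x, hx, rfl⟩, hfst⟩

lemma analyticSet_P (hτ : Continuous τ) (s : List ℕ) : MeasureTheory.AnalyticSet (P τ s) :=
  (((isClosed_cylE s).analyticSet).image_of_continuous hτ).image_of_continuous continuous_fst

lemma D_nonempty_extend {y : ℕ → Bool} {s : List ℕ} (h : (D τ y s).Nonempty) :
    ∃ k, (D τ y (s ++ [k])).Nonempty := by
  obtain ⟨x, hx, hfst⟩ := h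
  exact ⟨x s.length, x, mem_cylE_append.mpr ⟨hx, rfl⟩, hfst⟩

/-- the finite stages of the leftmost branch over `y` -/
noncomputable def lseq (y : ℕ → Bool) : ℕ → List ℕ
  | 0 => []
  | n + 1 => lseq y n ++ [sInf {k | (D τ y (lseq y n ++ [k])).Nonempty}]

lemma lseq_length (y : ℕ → Bool) (n : ℕ) : (lseq τ y n).length = n := by
  induction n with
  | zero => rfl
  | succ n ih => simp [lseq, ih]

lemma lseq_prefix (y : ℕ → Bool) {n m : ℕ} (h : n ≤ m) : lseq τ y n <+: lseq τ y m := by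
  induction m with
  | zero => simp_all
  | succ m ih =>
    rcases Nat.lt_or_ge n (m + 1) with h' | h'
    · exact (ih (by omega)).trans ⟨_, rfl⟩
    · have : n = m + 1 := by omega
      subst this; exact List.prefix_refl _

lemma D_lseq_nonempty {y : ℕ → Bool} (hy : ∃ x, (τ x).1 = y) (n : ℕ) :
    (D τ y (lseq τ y n)).Nonempty := by
  induction n with
  | zero =>
    obtain ⟨x, hx⟩ := hy
    exact ⟨x, by simp [lseq, cylE_nil], hx⟩
  | succ n ih =>
    obtain ⟨k, hk⟩ := D_nonempty_extend τ ih
    have hne : {k | (D τ y (lseq τ y n ++ [k])).Nonempty}.Nonempty := ⟨k, hk⟩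
    exact Nat.sInf_mem hne

/-- the leftmost branch over `y` -/
noncomputable def lb (y : ℕ → Bool) : ℕ → ℕ := fun i => (lseq τ y (i + 1)).getD i 0

lemma lb_getD {y : ℕ → Bool} {i n : ℕ} (h : i < n) :
    (lseq τ y n).getD i 0 = lb τ y i := by
  rw [lb, getD_prefix (lseq_prefix τ y (show i + 1 ≤ n by omega))]
  rw [lseq_length]; omega

lemma lb_mem_cylE (y : ℕ → Bool) (n : ℕ) : lb τ y ∈ cylE (lseq τ y n) := by
  intro i hi
  rw [lseq_length] at hi
  exact (lb_getD τ hi).symm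

lemma lb_mem_cylE_iff {y : ℕ → Bool} {s : List ℕ} :
    lb τ y ∈ cylE s ↔ lseq τ y s.length = s := by
  constructor
  · intro h
    refine List.ext_getElem (by rw [lseq_length]) (fun i h1 h2 => ?_)
    rw [lseq_length] at h1
    rw [← List.getD_eq_getElem (lseq τ y s.length) 0 (by rw [lseq_length]; exact h1),
      ← List.getD_eq_getElem s 0 h2, lb_getD τ h1]
    exact h i h2
  · intro h
    have := lb_mem_cylE τ y s.length
    rwa [h] at this

/-- the key property: the leftmost branch lies over `y`. -/
lemma fst_lb (hτ : Continuous τ) {y : ℕ → Bool} (hy : ∃ x, (τ x).1 = y) :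
    (τ (lb τ y)).1 = y := by
  have hsel : ∀ n, ∃ x, x ∈ cylE (lseq τ y n) ∧ (τ x).1 = y := fun n => D_lseq_nonempty τ hy n
  choose a ha1 ha2 using hsel
  have htend : Filter.Tendsto a Filter.atTop (𝓝 (lb τ y)) := by
    rw [tendsto_pi_nhds]
    intro i
    refine Filter.Tendsto.congr' ?_ tendsto_const_nhds
    filter_upwards [Filter.mem_atTop (i + 1)] with n hn
    have := ha1 n i (by rw [lseq_length]; omega)
    rw [this, lb_getD τ (show i < n by omega)]
  have h1 : Filter.Tendsto (fun n => (τ (a n)).1) Filter.atTop (𝓝 ((τ (lb τ y)).1)) :=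
    ((continuous_fst.comp hτ).tendsto _).comp htend
  have h2 : Filter.Tendsto (fun n => (τ (a n)).1) Filter.atTop (𝓝 y) := by
    simp only [ha2]; exact tendsto_const_nhds
  exact tendsto_nhds_unique h1 h2

section meas

variable {Y : Type*} (u : MeasurableSpace Y) (θ : Y → (ℕ → Bool))
variable (hθG : ∀ y, ∃ x, (τ x).1 = θ y)
variable (hP : ∀ s : List ℕ, MeasurableSet[u] (θ ⁻¹' P τ s))

include hθG hP in
lemma measurableSet_lseq_eq : ∀ (n : ℕ) (s : List ℕ),
    MeasurableSet[u] {y | lseq τ (θ y) n = s} := by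
  intro n
  induction n with
  | zero =>
    intro s
    by_cases h : s = []
    · subst h
      have : {y | lseq τ (θ y) 0 = ([] : List ℕ)} = Set.univ := by
        ext y; simp [lseq]
      rw [this]; exact MeasurableSet.univ
    · have : {y | lseq τ (θ y) 0 = s} = ∅ := by
        ext y; simp only [Set.mem_setOf_eq, Set.mem_empty_iff_false, iff_false]
        intro hc; exact h (hc ▸ rfl)
      rw [this]; exact MeasurableSet.empty
  | succ n ih =>
    intro s
    by_cases h : s = []
    · subst h
      have : {y | lseq τ (θ y) (n + 1) = ([] : List ℕ)} = ∅ := by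
        ext y
        simp only [Set.mem_setOf_eq, Set.mem_empty_iff_false, iff_false]
        intro hc
        have := lseq_length τ (θ y) (n + 1)
        rw [hc] at this
        simp at this
      rw [this]; exact MeasurableSet.empty
    · set s' := s.dropLast with hs'
      set k := s.getLast h with hk
      have hsplit : s = s' ++ [k] := (List.dropLast_append_getLast h).symm
      have hset : {y | lseq τ (θ y) (n + 1) = s} =
          {y | lseq τ (θ y) n = s'} ∩ (θ ⁻¹' P τ s) ∩
            ⋂ j ∈ Finset.range k, (θ ⁻¹' P τ (s' ++ [j]))ᶜ := by
        ext y
        simp only [Set.mem_inter_iff, Set.mem_setOf_eq, Set.mem_preimage, Set.mem_iInter,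
          Finset.mem_range, Set.mem_compl_iff]
        constructor
        · intro hy
          set S := {j | (D τ (θ y) (lseq τ (θ y) n ++ [j])).Nonempty} with hS
          have hrec : lseq τ (θ y) (n + 1) = lseq τ (θ y) n ++ [sInf S] := rfl
          have hslen : s.length = n + 1 := by rw [← hy, lseq_length]
          have hlen : (lseq τ (θ y) n).length = s'.length := by
            rw [lseq_length, hs', List.length_dropLast, hslen]
            omega
          obtain ⟨hpre, hlast'⟩ :=
            List.append_inj (hrec.symm.trans (hy.trans hsplit)) hlen
          have hlast : sInf S = k := by simpa using hlast'
          have hSne : S.Nonempty := by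
            obtain ⟨j, hj⟩ := D_nonempty_extend τ (D_lseq_nonempty τ (hθG y) n)
            exact ⟨j, hj⟩
          have hkS : k ∈ S := hlast ▸ Nat.sInf_mem hSne
          refine ⟨⟨hpre, ?_⟩, ?_⟩
          · rw [mem_P_iff, hsplit, ← hpre]
            exact hkS
          · intro j hj
            rw [mem_P_iff, ← hpre]
            exact Nat.notMem_of_lt_sInf (hlast ▸ hj)
        · rintro ⟨⟨hpre, hPs⟩, hsmall⟩
          set S := {j | (D τ (θ y) (lseq τ (θ y) n ++ [j])).Nonempty} with hS
          have hkS : k ∈ S := by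
            rw [hS, Set.mem_setOf_eq, hpre, ← hsplit]
            exact (mem_P_iff τ).mp hPs
          have hmin : ∀ j < k, j ∉ S := by
            intro j hj hjS
            exact hsmall j hj (by rw [mem_P_iff, ← hpre]; exact hjS)
          have hinf : sInf S = k := by
            refine le_antisymm (Nat.sInf_le hkS) ?_
            by_contra hc
            push_neg at hc
            exact hmin _ hc (Nat.sInf_mem ⟨k, hkS⟩)
          show lseq τ (θ y) n ++ [sInf S] = s
          rw [hinf, hpre, ← hsplit]
      rw [hset]
      refine ((ih s').inter (hP s)).inter ?_
      exact MeasurableSet.biInter (Set.to_countable _) fun j _ => (hP (s' ++ [j])).compl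

open MeasureTheory in
include hθG hP in
/-- the composed selector read off in Cantor space is `u`-measurable -/
lemma measurable_snd_lb (hτ : Continuous τ) :
    Measurable[u] (fun y => (τ (lb τ (θ y))).2) := by
  rw [measurable_pi_iff]
  intro n
  refine measurable_to_countable' (fun b => ?_)
  set W : Set (ℕ → ℕ) := (fun x => (τ x).2 n) ⁻¹' {b} with hW
  have hWopen : IsOpen W :=
    (isOpen_discrete {b}).preimage ((continuous_apply n).comp (continuous_snd.comp hτ))
  have hset : (fun y => (τ (lb τ (θ y))).2 n) ⁻¹' {b} =
      ⋃ s : {s : List ℕ // cylE s ⊆ W}, {y | lseq τ (θ y) (s : List ℕ).length = (s : List ℕ)} := by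
    ext y
    simp only [Set.mem_preimage, Set.mem_singleton_iff, Set.mem_iUnion]
    constructor
    · intro hy
      obtain ⟨s, h1, h2⟩ := exists_cylE_subset hWopen (show lb τ (θ y) ∈ W from hy)
      exact ⟨⟨s, h1⟩, (lb_mem_cylE_iff τ).mp h2⟩
    · rintro ⟨⟨s, h1⟩, h2⟩
      exact h1 ((lb_mem_cylE_iff τ).mpr h2)
  rw [hset]
  exact MeasurableSet.iUnion fun s => measurableSet_lseq_eq τ u θ hθG hP _ _

end meas

end YvN2

end part2

section part3

open MeasureTheory Set

namespace YvN3

/-- the σ-algebra of universally approximable sets -/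
def univMS (Y : Type*) [MeasurableSpace Y] : MeasurableSpace Y where
  MeasurableSet' W := ∀ ν : Measure Y, IsProbabilityMeasure ν →
    ∃ Fm Fp : Set Y, MeasurableSet Fm ∧ MeasurableSet Fp ∧ Fm ⊆ W ∧ W ⊆ Fp ∧ ν (Fp \ Fm) = 0
  measurableSet_empty := fun ν _ =>
    ⟨∅, ∅, MeasurableSet.empty, MeasurableSet.empty, subset_rfl, subset_rfl, by simp⟩
  measurableSet_compl := by
    intro W hW ν hν
    obtain ⟨Fm, Fp, h1, h2, h3, h4, h5⟩ := hW ν hν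
    refine ⟨Fpᶜ, Fmᶜ, h2.compl, h1.compl, compl_subset_compl.mpr h4,
      compl_subset_compl.mpr h3, ?_⟩
    have he : Fmᶜ \ Fpᶜ = Fp \ Fm := by ext z; simp [Set.mem_diff]; tauto
    rwa [he]
  measurableSet_iUnion := by
    intro W hW ν hν
    choose Fm Fp h1 h2 h3 h4 h5 using fun n => hW n ν hν
    refine ⟨⋃ n, Fm n, ⋃ n, Fp n, MeasurableSet.iUnion h1, MeasurableSet.iUnion h2,
      iUnion_mono h3, iUnion_mono h4, ?_⟩
    rw [iUnion_diff]
    exact measure_iUnion_null fun n =>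
      measure_mono_null (diff_subset_diff_right (subset_iUnion Fm n)) (h5 n)

lemma measurable_univMS {Y : Type*} [MeasurableSpace Y] {W : Set Y} (hW : MeasurableSet W) :
    MeasurableSet[univMS Y] W :=
  fun ν _ => ⟨W, W, hW, hW, subset_rfl, subset_rfl, by simp⟩

lemma univMS_of_analytic_preimage {Y : Type*} [MeasurableSpace Y] (θ : Y → (ℕ → Bool))
    (hθm : Measurable θ) {Z : Set (ℕ → Bool)} (hZ : AnalyticSet Z) :
    MeasurableSet[univMS Y] (θ ⁻¹' Z) := by
  intro ν hν
  haveI : IsProbabilityMeasure (ν.map θ) := Measure.isProbabilityMeasure_map hθm.aemeasurable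
  obtain ⟨Sm, Sp, h1, h2, h3, h4, h5⟩ := YvN.analytic_approx hZ (ν.map θ)
  refine ⟨θ ⁻¹' Sm, θ ⁻¹' Sp, hθm h1, hθm h2, preimage_mono h3, preimage_mono h4, ?_⟩
  calc ν (θ ⁻¹' Sp \ θ ⁻¹' Sm) = ν.map θ (Sp \ Sm) := by
        rw [Measure.map_apply hθm (h2.diff h1), preimage_diff]
    _ = 0 := h5

lemma injective_of_exact {Y : Type*} [MeasurableSpace Y] [MeasurableSingletonClass Y]
    {θ : Y → ℕ → Bool} (hθ : MeasurableSpace.comap θ inferInstance = ‹MeasurableSpace Y›) :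
    Function.Injective θ := by
  intro a b hab
  have h1 : MeasurableSet[MeasurableSpace.comap θ inferInstance] {b} := by
    rw [hθ]; exact measurableSet_singleton b
  rw [MeasurableSpace.measurableSet_comap] at h1
  obtain ⟨S, hS, hpre⟩ := h1
  have hb : θ b ∈ S := by
    have : b ∈ θ ⁻¹' S := by rw [hpre]; exact rfl
    exact this
  have ha : a ∈ θ ⁻¹' S := by rw [mem_preimage, hab]; exact hb
  rw [hpre] at ha
  exact ha

end YvN3

end part3

open Set

/-- (Yankov–von Neumann selection) Let `f : (X,E) → (Y,F)` be a surjective measurable map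
between separable type A spaces.  Then there is a selector `g : Y → X` for `f` which is
universally measurable: for every `E' ∈ E` and every probability measure `ν` on `(Y,F)`
there are `F⁻, F⁺ ∈ F` with `F⁻ ⊆ g⁻¹(E') ⊆ F⁺` and `ν(F⁺ \ F⁻) = 0`. -/
theorem stmt8 {X Y : Type*} [MeasurableSpace X] [MeasurableSpace Y]
    [MeasurableSingletonClass X] [MeasurableSingletonClass Y]
    (hX : IsTypeA X) (hY : IsTypeA Y)
    (f : X → Y) (hf : Measurable f) (hsurj : Function.Surjective f) :
    ∃ g : Y → X, (∀ y, f (g y) = y) ∧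
      ∀ E' : Set X, MeasurableSet E' →
        ∀ ν : Measure Y, IsProbabilityMeasure ν →
          ∃ Fm Fp : Set Y, MeasurableSet Fm ∧ MeasurableSet Fp ∧
            Fm ⊆ g ⁻¹' E' ∧ g ⁻¹' E' ⊆ Fp ∧ ν (Fp \ Fm) = 0 := by
  obtain ⟨hXcg, ψ, hψ, hψA⟩ := hX
  obtain ⟨hYcg, θ, hθ, hθA⟩ := hY
  rw [ExactlyMeasurable] at hψ hθ
  have hθm : Measurable θ := Measurable.of_comap_le (le_of_eq hθ)
  have hψm : Measurable ψ := Measurable.of_comap_le (le_of_eq hψ)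
  have hθinj : Function.Injective θ := YvN3.injective_of_exact hθ
  -- cylinder sets of the Cantor space
  set V : ℕ → Set (ℕ → Bool) := fun n => {m | m n = true} with hVdef
  have hVmeas : ∀ n, MeasurableSet (V n) := by
    intro n
    have : V n = (fun m : ℕ → Bool => m n) ⁻¹' {true} := rfl
    rw [this]
    exact (measurable_pi_apply n) (measurableSet_singleton true)
  -- Borel sets transporting the measurability of `θ ∘ f` through `ψ`
  have hBex : ∀ n, ∃ B : Set (ℕ → Bool), MeasurableSet B ∧
      ψ ⁻¹' B = (fun x => θ (f x)) ⁻¹' V n := by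
    intro n
    have hm : MeasurableSet[MeasurableSpace.comap ψ inferInstance]
        ((fun x => θ (f x)) ⁻¹' V n) := by
      rw [hψ]; exact (hθm.comp hf) (hVmeas n)
    rw [MeasurableSpace.measurableSet_comap] at hm
    obtain ⟨B, hB, hBpre⟩ := hm
    exact ⟨B, hB, hBpre⟩
  choose B hBmeas hBpre using hBex
  -- the graph of `f` transported to the Cantor square, an analytic set
  set G : Set ((ℕ → Bool) × (ℕ → Bool)) := range (fun x => (θ (f x), ψ x)) with hGdef
  set DD : ℕ → Set ((ℕ → Bool) × (ℕ → Bool)) := fun n =>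
    match n with
    | 0 => univ ×ˢ range ψ
    | k + 1 => (V k ×ˢ B k) ∪ ((V k)ᶜ ×ˢ (B k)ᶜ) with hDDdef
  have hGeq : G = ⋂ n, DD n := by
    ext ⟨p, q⟩
    simp only [mem_iInter]
    constructor
    · rintro ⟨x, hx⟩
      rw [Prod.mk.injEq] at hx
      obtain ⟨hp, hq⟩ := hx
      intro n
      match n with
      | 0 =>
        refine ⟨trivial, ?_⟩
        rw [← hq]
        exact mem_range_self x
      | k + 1 =>
        by_cases hk : θ (f x) ∈ V k
        · left
          constructor
          · rw [← hp]; exact hk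
          · rw [← hq]
            have : x ∈ ψ ⁻¹' B k := by rw [hBpre k]; exact hk
            exact this
        · right
          constructor
          · rw [← hp]; exact hk
          · rw [← hq]
            intro hc
            have : x ∈ ψ ⁻¹' B k := hc
            rw [hBpre k] at this
            exact hk this
    · intro hall
      obtain ⟨x, rfl⟩ : q ∈ range ψ := (hall 0).2
      have hiff : ∀ n, p ∈ V n ↔ ψ x ∈ B n := by
        intro n
        rcases hall (n + 1) with ⟨h1, h2⟩ | ⟨h1, h2⟩
        · exact ⟨fun _ => h2, fun _ => h1⟩
        · exact ⟨fun hc => absurd hc h1, fun hc => absurd hc h2⟩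
      have hpe : p = θ (f x) := by
        funext n
        have h1 : p n = true ↔ (θ (f x)) n = true := by
          rw [show (p n = true) ↔ p ∈ V n from Iff.rfl, hiff n,
            show (ψ x ∈ B n) ↔ x ∈ ψ ⁻¹' B n from Iff.rfl, hBpre n]
          exact Iff.rfl
        exact Bool.eq_iff_iff.mpr h1
      exact ⟨x, by rw [hpe]⟩
  have hDDanal : ∀ n, AnalyticSet (DD n) := by
    intro n
    match n with
    | 0 =>
      rw [AnalyticSet_def] at hψA
      rcases hψA with hE | ⟨σ', hσ'c, hσ'r⟩
      · show AnalyticSet (univ ×ˢ range ψ)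
        rw [hE]
        simp only [prod_empty]
        exact analyticSet_empty
      · rw [analyticSet_iff_exists_polishSpace_range]
        refine ⟨(ℕ → Bool) × (ℕ → ℕ), inferInstance, inferInstance, Prod.map id σ',
          continuous_id.prodMap hσ'c, ?_⟩
        show range (Prod.map id σ') = univ ×ˢ range ψ
        rw [Set.range_prodMap, Set.range_id, hσ'r]
    | k + 1 =>
      exact (((hVmeas k).prod (hBmeas k)).union
        ((hVmeas k).compl.prod (hBmeas k).compl)).analyticSet
  have hGanal : AnalyticSet G := hGeq ▸ MeasureTheory.AnalyticSet.iInter hDDanal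
  rw [AnalyticSet_def] at hGanal
  rcases hGanal with hGE | ⟨τ, hτc, hτr⟩
  · -- the graph is empty: `Y` is empty and everything is vacuous
    have hYempty : IsEmpty Y := by
      refine ⟨fun y => ?_⟩
      obtain ⟨x, hx⟩ := hsurj y
      have : (θ (f x), ψ x) ∈ G := mem_range_self x
      rw [hGE] at this
      exact this
    refine ⟨fun y => (hsurj y).choose, fun y => isEmptyElim y, fun E' _ ν hν => ?_⟩
    exfalso
    have h1 : ν univ = 1 := hν.measure_univ
    rw [Set.univ_eq_empty_iff.mpr hYempty, measure_empty] at h1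
    simp at h1
  · -- main case
    have hθG : ∀ y : Y, ∃ a, (τ a).1 = θ y := by
      intro y
      obtain ⟨x, rfl⟩ := hsurj y
      have h1 : (θ (f x), ψ x) ∈ range τ := by rw [hτr]; exact mem_range_self x
      obtain ⟨a, ha⟩ := h1
      exact ⟨a, by rw [ha]⟩
    have hgex : ∀ y : Y, ∃ x : X, ψ x = (τ (YvN2.lb τ (θ y))).2 ∧ f x = y := by
      intro y
      have h1 : τ (YvN2.lb τ (θ y)) ∈ G := by rw [← hτr]; exact mem_range_self _
      obtain ⟨x, hx⟩ := h1
      have hfst : θ (f x) = θ y :=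
        (congrArg Prod.fst hx).trans (YvN2.fst_lb τ hτc (hθG y))
      exact ⟨x, (congrArg Prod.snd hx), hθinj hfst⟩
    choose g hg1 hg2 using hgex
    refine ⟨g, hg2, ?_⟩
    intro E' hE' ν hν
    -- transport `E'` through `ψ`
    have hm : MeasurableSet[MeasurableSpace.comap ψ inferInstance] E' := by rw [hψ]; exact hE'
    rw [MeasurableSpace.measurableSet_comap] at hm
    obtain ⟨S, hS, hpre⟩ := hm
    have hPmeas : ∀ s : List ℕ, MeasurableSet[YvN3.univMS Y] (θ ⁻¹' YvN2.P τ s) :=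
      fun s => YvN3.univMS_of_analytic_preimage θ hθm (YvN2.analyticSet_P τ hτc s)
    have hH : Measurable[YvN3.univMS Y] (fun y => (τ (YvN2.lb τ (θ y))).2) :=
      YvN2.measurable_snd_lb τ (YvN3.univMS Y) θ hθG hPmeas hτc
    have hmain : MeasurableSet[YvN3.univMS Y] (g ⁻¹' E') := by
      have heq : g ⁻¹' E' = (fun y => (τ (YvN2.lb τ (θ y))).2) ⁻¹' S := by
        ext y
        rw [mem_preimage, ← hpre, mem_preimage, hg1 y, mem_preimage]
      rw [heq]
      exact hH hS
    exact hmain ν hν
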